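/- arXiv:0902.4823 — 4 statements merged into one kernel-verified Lean document; each statement's English description precedes it below -/
import Mathlib

section
/- Let p: E → B be a Hurewicz fibration. If the base space B is a normal topological space, then secat p ≤ n if and only if the n-th join map jⁿp: *ⁿ_B E → B admits a continuous section (a continuous map s: B → *ⁿ_B E with jⁿp ∘ s = id_B). -/
open unitInterval

universe u v w

/-- Homotopy lifting property of `p` with respect to the space `Y`. -/
def HasHLPWrt {E : Type u} {B : Type v} [TopologicalSpace E] [TopologicalSpace B]
    (p : E → B) (Y : Type w) [TopologicalSpace Y] : Prop :=
  ∀ (H : Y × I → B) (h : Y → E), Continuous H → Continuous h →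
    (∀ y, p (h y) = H (y, 0)) →
    ∃ H' : Y × I → E, Continuous H' ∧ (∀ z, p (H' z) = H z) ∧ ∀ y, H' (y, 0) = h y

/-- A Hurewicz fibration: a continuous map with the homotopy lifting property with
respect to all topological spaces. -/
def IsHurewiczFibration {E : Type u} {B : Type v} [TopologicalSpace E] [TopologicalSpace B]
    (p : E → B) : Prop :=
  Continuous p ∧ ∀ (Y : Type w) [TopologicalSpace Y], HasHLPWrt p Y

/-- `SecatLe p n` : the sectional category of `p` is at most `n`, i.e. the base can be
covered by `n+1` open sets on each of which `p` admits a continuous local section. -/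
def SecatLe {E : Type u} {B : Type v} [TopologicalSpace E] [TopologicalSpace B]
    (p : E → B) (n : ℕ) : Prop :=
  ∃ U : Fin (n + 1) → Set B, (∀ i, IsOpen (U i)) ∧ (∀ b, ∃ i, b ∈ U i) ∧
    ∀ i, ∃ s : U i → E, Continuous s ∧ ∀ x : U i, p (s x) = (x : B)

/-- The space underlying the double mapping cylinder construction of the fiber join. -/
def PreJoin {E : Type u} {E' : Type v} {B : Type w}
    (p : E → B) (p' : E' → B) : Type (max u v) :=
  ({z : E × E' // p z.1 = p' z.2} × I) ⊕ E ⊕ E'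

instance {E : Type u} {E' : Type v} {B : Type w} [TopologicalSpace E] [TopologicalSpace E']
    (p : E → B) (p' : E' → B) : TopologicalSpace (PreJoin p p') :=
  inferInstanceAs (TopologicalSpace (({z : E × E' // p z.1 = p' z.2} × I) ⊕ E ⊕ E'))

/-- The identifications defining the fiber join: `(e,e',0) ~ e` and `(e,e',1) ~ e'`. -/
inductive JoinRel {E : Type u} {E' : Type v} {B : Type w} (p : E → B) (p' : E' → B) :
    PreJoin p p' → PreJoin p p' → Prop
  | zero (z : {z : E × E' // p z.1 = p' z.2}) :
      JoinRel p p' (Sum.inl (z, 0)) (Sum.inr (Sum.inl z.1.1))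
  | one (z : {z : E × E' // p z.1 = p' z.2}) :
      JoinRel p p' (Sum.inl (z, 1)) (Sum.inr (Sum.inr z.1.2))

/-- The fiber join `E *_B E'` of two maps `p : E → B`, `p' : E' → B`. -/
def FiberJoin {E : Type u} {E' : Type v} {B : Type w} (p : E → B) (p' : E' → B) :
    Type (max u v) :=
  Quot (JoinRel p p')

instance {E : Type u} {E' : Type v} {B : Type w} [TopologicalSpace E] [TopologicalSpace E']
    (p : E → B) (p' : E' → B) : TopologicalSpace (FiberJoin p p') :=
  inferInstanceAs (TopologicalSpace (Quot (JoinRel p p')))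

/-- The join map `E *_B E' → B`. -/
def joinMap {E : Type u} {E' : Type v} {B : Type w} (p : E → B) (p' : E' → B) :
    FiberJoin p p' → B :=
  Quot.lift
    (fun z => match z with
      | Sum.inl (z, _) => p z.1.1
      | Sum.inr (Sum.inl e) => p e
      | Sum.inr (Sum.inr e') => p' e')
    (by rintro a b (⟨z⟩ | ⟨z⟩)
        · rfl
        · exact z.2)

/-- Iterated data for the `n`-fold fiber join: carrier, topology, and `n`-th join map. -/
def nJoinData {E : Type u} {B : Type v} [TopologicalSpace E] [TopologicalSpace B]
    (p : E → B) : ℕ → (T : Type u) ×' (_ : TopologicalSpace T) ×' (T → B)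
  | 0 => ⟨E, inferInstance, p⟩
  | n + 1 =>
      let prev := nJoinData p n
      letI : TopologicalSpace prev.1 := prev.2.1
      ⟨FiberJoin prev.2.2 p, inferInstance, joinMap prev.2.2 p⟩

/-- The `n`-fold fiber join `*ⁿ_B E`. -/
def nJoin {E : Type u} {B : Type v} [TopologicalSpace E] [TopologicalSpace B]
    (p : E → B) (n : ℕ) : Type u :=
  (nJoinData p n).1

instance {E : Type u} {B : Type v} [TopologicalSpace E] [TopologicalSpace B]
    (p : E → B) (n : ℕ) : TopologicalSpace (nJoin p n) :=
  (nJoinData p n).2.1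

/-- The `n`-th join map `jⁿp : *ⁿ_B E → B`. -/
def nJoinMap {E : Type u} {B : Type v} [TopologicalSpace E] [TopologicalSpace B]
    (p : E → B) (n : ℕ) : nJoin p n → B :=
  (nJoinData p n).2.2

set_option linter.unusedSectionVars false
section FiberJoinAux

variable {E : Type u} {E' : Type v} {B : Type w}
  [TopologicalSpace E] [TopologicalSpace E'] [TopologicalSpace B]
  (p : E → B) (p' : E' → B)

/-- inclusion of `E` into the fiber join -/
def mkLeft (e : E) : FiberJoin p p' := Quot.mk _ (Sum.inr (Sum.inl e))

/-- inclusion of `E'` into the fiber join -/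
def mkRight (e' : E') : FiberJoin p p' := Quot.mk _ (Sum.inr (Sum.inr e'))

/-- inclusion of the cylinder into the fiber join -/
def mkMix (z : {z : E × E' // p z.1 = p' z.2} × I) : FiberJoin p p' :=
  Quot.mk _ (Sum.inl z)

lemma continuous_mkLeft : Continuous (mkLeft p p') :=
  continuous_quot_mk.comp (continuous_inr.comp continuous_inl)

lemma continuous_mkRight : Continuous (mkRight p p') :=
  continuous_quot_mk.comp (continuous_inr.comp continuous_inr)

lemma continuous_mkMix : Continuous (mkMix p p') :=
  continuous_quot_mk.comp continuous_inl

lemma mkMix_zero (z : {z : E × E' // p z.1 = p' z.2}) :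
    mkMix p p' (z, 0) = mkLeft p p' z.1.1 := Quot.sound (JoinRel.zero z)

lemma mkMix_one (z : {z : E × E' // p z.1 = p' z.2}) :
    mkMix p p' (z, 1) = mkRight p p' z.1.2 := Quot.sound (JoinRel.one z)

@[simp] lemma joinMap_mkLeft (e : E) : joinMap p p' (mkLeft p p' e) = p e := rfl
@[simp] lemma joinMap_mkRight (e' : E') : joinMap p p' (mkRight p p' e') = p' e' := rfl
@[simp] lemma joinMap_mkMix (z) : joinMap p p' (mkMix p p' z) = p z.1.1.1 := rfl

/-- partial right coordinate on the cylinder-plus-ends picture -/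
noncomputable def rightValAux : PreJoin p p' → Option E'
  | Sum.inl (z, t) => if t = 0 then none else some z.1.2
  | Sum.inr (Sum.inl _) => none
  | Sum.inr (Sum.inr e') => some e'

@[simp] lemma rightValAux_inl (z) (t : I) :
    rightValAux p p' (Sum.inl (z, t)) = if t = 0 then none else some z.1.2 := rfl
@[simp] lemma rightValAux_inrl (e : E) : rightValAux p p' (Sum.inr (Sum.inl e)) = none := rfl
@[simp] lemma rightValAux_inrr (e' : E') :
    rightValAux p p' (Sum.inr (Sum.inr e')) = some e' := rfl

/-- partial left coordinate on the cylinder-plus-ends picture -/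
noncomputable def leftValAux : PreJoin p p' → Option E
  | Sum.inl (z, t) => if t = 1 then none else some z.1.1
  | Sum.inr (Sum.inl e) => some e
  | Sum.inr (Sum.inr _) => none

@[simp] lemma leftValAux_inl (z) (t : I) :
    leftValAux p p' (Sum.inl (z, t)) = if t = 1 then none else some z.1.1 := rfl
@[simp] lemma leftValAux_inrl (e : E) : leftValAux p p' (Sum.inr (Sum.inl e)) = some e := rfl
@[simp] lemma leftValAux_inrr (e' : E') :
    leftValAux p p' (Sum.inr (Sum.inr e')) = none := rfl

/-- partial right coordinate, as an option-valued map -/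
noncomputable def rightVal : FiberJoin p p' → Option E' :=
  Quot.lift (rightValAux p p')
    (by
      rintro a b (⟨z⟩ | ⟨z⟩)
      · simp
      · simp [(by norm_num : (1 : I) ≠ 0)])

/-- partial left coordinate, as an option-valued map -/
noncomputable def leftVal : FiberJoin p p' → Option E :=
  Quot.lift (leftValAux p p')
    (by
      rintro a b (⟨z⟩ | ⟨z⟩)
      · simp [(by norm_num : (0 : I) ≠ 1)]
      · simp)

@[simp] lemma rightVal_mk (a : PreJoin p p') :
    rightVal p p' (Quot.mk _ a) = rightValAux p p' a := rfl
@[simp] lemma leftVal_mk (a : PreJoin p p') :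
    leftVal p p' (Quot.mk _ a) = leftValAux p p' a := rfl

/-- the set where the right coordinate is defined -/
def rightSet : Set (FiberJoin p p') := {x | (rightVal p p' x).isSome}

/-- the set where the left coordinate is defined -/
def leftSet : Set (FiberJoin p p') := {x | (leftVal p p' x).isSome}

lemma mem_left_or_right (x : FiberJoin p p') :
    x ∈ leftSet p p' ∨ x ∈ rightSet p p' := by
  induction x using Quot.ind with
  | _ a =>
    rcases a with ⟨z, t⟩ | e | e'
    · by_cases h : t = 0
      · left
        show (if t = 1 then none else some z.1.1 : Option E).isSome
        simp [h, (by norm_num : (0:I) ≠ 1)]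
      · right
        show (if t = 0 then none else some z.1.2 : Option E').isSome
        simp [h]
    · left; exact rfl
    · right; exact rfl

end FiberJoinAux
section FiberJoinAux2
set_option linter.unusedSectionVars false

lemma some_mem_some_image {γ : Type*} {W : Set γ} {v : γ} :
    some v ∈ some '' W ↔ v ∈ W := by
  constructor
  · rintro ⟨e, he, h⟩; rwa [← Option.some_inj.mp h]
  · intro h; exact ⟨v, h, rfl⟩

lemma none_not_mem_some_image {γ : Type*} {W : Set γ} :
    (none : Option γ) ∉ some '' W := by
  rintro ⟨e, _, h⟩; exact Option.some_ne_none e h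

lemma ite_none_mem_some_image {γ : Type*} {W : Set γ} {c : Prop} [Decidable c] {v : γ} :
    ((if c then none else some v) ∈ some '' W) ↔ ¬c ∧ v ∈ W := by
  split
  · simp [none_not_mem_some_image, *]
  · simp [some_mem_some_image, *]

variable {E : Type u} {E' : Type v} {B : Type w}
  [TopologicalSpace E] [TopologicalSpace E'] [TopologicalSpace B]
  (p : E → B) (p' : E' → B)

lemma isOpen_rightVal_preimage {W : Set E'} (hW : IsOpen W) :
    IsOpen {x : FiberJoin p p' | rightVal p p' x ∈ some '' W} := by
  apply (isQuotientMap_quot_mk.isOpen_preimage).mp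
  refine isOpen_sum_iff.mpr ?_
  refine ⟨?_, ?_⟩
  · have h1 : Sum.inl ⁻¹' (Quot.mk _ ⁻¹' {x : FiberJoin p p' | rightVal p p' x ∈ some '' W})
        = {zt : {z : E × E' // p z.1 = p' z.2} × I |
            (if zt.2 = 0 then none else some zt.1.1.2) ∈ some '' W} := rfl
    have h2 : {zt : {z : E × E' // p z.1 = p' z.2} × I |
            (if zt.2 = 0 then none else some zt.1.1.2) ∈ some '' W}
        = {zt : {z : E × E' // p z.1 = p' z.2} × I | zt.2 ≠ 0} ∩ {zt | zt.1.1.2 ∈ W} := by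
      ext zt; exact ite_none_mem_some_image
    refine (congrArg IsOpen (h1.trans h2)).mpr ?_
    exact IsOpen.inter (isOpen_compl_singleton.preimage continuous_snd)
      (hW.preimage (continuous_snd.comp (continuous_subtype_val.comp continuous_fst)))
  · rw [isOpen_sum_iff]
    refine ⟨?_, ?_⟩
    · have h1 : (Sum.inl ⁻¹' (Sum.inr ⁻¹'
          (Quot.mk _ ⁻¹' {x : FiberJoin p p' | rightVal p p' x ∈ some '' W})))
          = (∅ : Set E) := by
        ext e; exact iff_of_false none_not_mem_some_image (by simp)
      exact (congrArg IsOpen h1).mpr isOpen_empty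
    · have h1 : (Sum.inr ⁻¹' (Sum.inr ⁻¹'
          (Quot.mk _ ⁻¹' {x : FiberJoin p p' | rightVal p p' x ∈ some '' W}))) = W := by
        ext e'; exact some_mem_some_image
      exact (congrArg IsOpen h1).mpr hW

lemma isOpen_leftVal_preimage {W : Set E} (hW : IsOpen W) :
    IsOpen {x : FiberJoin p p' | leftVal p p' x ∈ some '' W} := by
  apply (isQuotientMap_quot_mk.isOpen_preimage).mp
  refine isOpen_sum_iff.mpr ?_
  refine ⟨?_, ?_⟩
  · have h1 : Sum.inl ⁻¹' (Quot.mk _ ⁻¹' {x : FiberJoin p p' | leftVal p p' x ∈ some '' W})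
        = {zt : {z : E × E' // p z.1 = p' z.2} × I |
            (if zt.2 = 1 then none else some zt.1.1.1) ∈ some '' W} := rfl
    have h2 : {zt : {z : E × E' // p z.1 = p' z.2} × I |
            (if zt.2 = 1 then none else some zt.1.1.1) ∈ some '' W}
        = {zt : {z : E × E' // p z.1 = p' z.2} × I | zt.2 ≠ 1} ∩ {zt | zt.1.1.1 ∈ W} := by
      ext zt; exact ite_none_mem_some_image
    refine (congrArg IsOpen (h1.trans h2)).mpr ?_
    exact IsOpen.inter (isOpen_compl_singleton.preimage continuous_snd)
      (hW.preimage (continuous_fst.comp (continuous_subtype_val.comp continuous_fst)))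
  · rw [isOpen_sum_iff]
    refine ⟨?_, ?_⟩
    · have h1 : (Sum.inl ⁻¹' (Sum.inr ⁻¹'
          (Quot.mk _ ⁻¹' {x : FiberJoin p p' | leftVal p p' x ∈ some '' W}))) = W := by
        ext e; exact some_mem_some_image
      exact (congrArg IsOpen h1).mpr hW
    · have h1 : (Sum.inr ⁻¹' (Sum.inr ⁻¹'
          (Quot.mk _ ⁻¹' {x : FiberJoin p p' | leftVal p p' x ∈ some '' W})))
          = (∅ : Set E') := by
        ext e'; exact iff_of_false none_not_mem_some_image (by simp)
      exact (congrArg IsOpen h1).mpr isOpen_empty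

lemma rightSet_eq : rightSet p p' = {x | rightVal p p' x ∈ some '' Set.univ} := by
  ext x
  simp only [rightSet, Set.mem_setOf_eq, Set.image_univ, Set.mem_range,
    Option.isSome_iff_exists]
  exact exists_congr fun e => eq_comm

lemma leftSet_eq : leftSet p p' = {x | leftVal p p' x ∈ some '' Set.univ} := by
  ext x
  simp only [leftSet, Set.mem_setOf_eq, Set.image_univ, Set.mem_range,
    Option.isSome_iff_exists]
  exact exists_congr fun e => eq_comm

lemma isOpen_rightSet : IsOpen (rightSet p p') := by
  rw [rightSet_eq]; exact isOpen_rightVal_preimage p p' isOpen_univ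

lemma isOpen_leftSet : IsOpen (leftSet p p') := by
  rw [leftSet_eq]; exact isOpen_leftVal_preimage p p' isOpen_univ

/-- the right coordinate map -/
noncomputable def rightCoord (x : rightSet p p') : E' := (rightVal p p' x.1).get x.2

/-- the left coordinate map -/
noncomputable def leftCoord (x : leftSet p p') : E := (leftVal p p' x.1).get x.2

lemma continuous_rightCoord : Continuous (rightCoord p p') := by
  rw [continuous_def]
  intro W hW
  have h1 : rightCoord p p' ⁻¹' W
      = Subtype.val ⁻¹' {x | rightVal p p' x ∈ some '' W} := by
    ext x
    rcases Option.isSome_iff_exists.mp x.2 with ⟨e, he⟩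
    simp only [Set.mem_preimage, Set.mem_setOf_eq, rightCoord]
    simp only [he, Option.get_some, some_mem_some_image]
  rw [h1]
  exact (isOpen_rightVal_preimage p p' hW).preimage continuous_subtype_val

lemma continuous_leftCoord : Continuous (leftCoord p p') := by
  rw [continuous_def]
  intro W hW
  have h1 : leftCoord p p' ⁻¹' W
      = Subtype.val ⁻¹' {x | leftVal p p' x ∈ some '' W} := by
    ext x
    rcases Option.isSome_iff_exists.mp x.2 with ⟨e, he⟩
    simp only [Set.mem_preimage, Set.mem_setOf_eq, leftCoord]
    simp only [he, Option.get_some, some_mem_some_image]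
  rw [h1]
  exact (isOpen_leftVal_preimage p p' hW).preimage continuous_subtype_val

lemma joinMap_rightCoord (x : rightSet p p') :
    p' (rightCoord p p' x) = joinMap p p' x.1 := by
  obtain ⟨x, hx⟩ := x
  induction x using Quot.ind with
  | _ a =>
    rcases a with ⟨z, t⟩ | e | e'
    · have ht : ¬ (t = 0) := by
        intro h
        apply Option.not_isSome_iff_eq_none.mpr _ hx
        show (if t = 0 then none else some z.1.2 : Option E') = none
        simp [h]
      have h1 : rightCoord p p' ⟨Quot.mk _ (Sum.inl (z, t)), hx⟩ = z.1.2 := by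
        show (if t = 0 then none else some z.1.2 : Option E').get _ = z.1.2; simp [ht]
      rw [h1]
      exact z.2.symm
    · exact absurd hx (fun h => Bool.false_ne_true h)
    · rfl

lemma joinMap_leftCoord (x : leftSet p p') :
    p (leftCoord p p' x) = joinMap p p' x.1 := by
  obtain ⟨x, hx⟩ := x
  induction x using Quot.ind with
  | _ a =>
    rcases a with ⟨z, t⟩ | e | e'
    · have ht : ¬ (t = 1) := by
        intro h
        apply Option.not_isSome_iff_eq_none.mpr _ hx
        show (if t = 1 then none else some z.1.1 : Option E) = none
        simp [h]
      have h1 : leftCoord p p' ⟨Quot.mk _ (Sum.inl (z, t)), hx⟩ = z.1.1 := by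
        show (if t = 1 then none else some z.1.1 : Option E).get _ = z.1.1; simp [ht]
      rw [h1]
      rfl
    · rfl
    · exact absurd hx (fun h => Bool.false_ne_true h)

end FiberJoinAux2
section Glue
open Topology
set_option linter.unusedSectionVars false

lemma isOpenEmbedding_inclusion {X : Type*} [TopologicalSpace X] {P D : Set X}
    (hP : IsOpen P) (h : P ⊆ D) : IsOpenEmbedding (Set.inclusion h) := by
  refine ⟨Topology.IsEmbedding.inclusion h, ?_⟩
  have : Set.range (Set.inclusion h) = Subtype.val ⁻¹' P := by
    ext x
    constructor
    · rintro ⟨y, rfl⟩; exact y.2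
    · intro hx; exact ⟨⟨x.1, hx⟩, rfl⟩
  rw [this]
  exact hP.preimage continuous_subtype_val

/-- Local continuity of a map on a subtype, given a continuous version on an open subset. -/
lemma continuousAt_glue {X γ : Type*} [TopologicalSpace X] [TopologicalSpace γ] {D P : Set X}
    (f : D → γ) (hP : IsOpen P) (hsub : P ⊆ D)
    (hloc : ∃ g : P → γ, Continuous g ∧ ∀ (x : X) (hx : x ∈ P), g ⟨x, hx⟩ = f ⟨x, hsub hx⟩)
    (x : D) (hx : x.1 ∈ P) : ContinuousAt f x := by
  obtain ⟨g, hg, hfg⟩ := hloc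
  have hxx : x = Set.inclusion hsub ⟨x.1, hx⟩ := rfl
  rw [hxx]
  rw [← (isOpenEmbedding_inclusion hP hsub).continuousAt_iff]
  have : f ∘ Set.inclusion hsub = g := by
    funext y
    exact (hfg y.1 y.2).symm
  rw [this]
  exact hg.continuousAt

end Glue
section Backward
set_option linter.unusedSectionVars false

variable {E : Type u} {B : Type v} [TopologicalSpace E] [TopologicalSpace B]

lemma secat_of_section_on_open (p : E → B) :
    ∀ (m : ℕ) (A : Set B), IsOpen A → ∀ s : A → nJoin p m, Continuous s →
      (∀ x : A, nJoinMap p m (s x) = x.1) →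
      ∃ U : Fin (m+1) → Set B, (∀ i, IsOpen (U i)) ∧ (∀ b ∈ A, ∃ i, b ∈ U i) ∧
        ∀ i, ∃ sg : U i → E, Continuous sg ∧ ∀ x : U i, p (sg x) = x.1 := by
  intro m
  induction m with
  | zero =>
    intro A hA s hs hsec
    exact ⟨fun _ => A, fun _ => hA, fun b hb => ⟨0, hb⟩, fun _ => ⟨s, hs, hsec⟩⟩
  | succ m ih =>
    intro A hA s hs hsec
    let q := nJoinMap p m
    let s' : A → FiberJoin q p := s
    have hs' : Continuous s' := hs
    have hsec' : ∀ x : A, joinMap q p (s' x) = x.1 := hsec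
    set AR : Set B := Subtype.val '' (s' ⁻¹' rightSet q p) with hARdef
    set AL : Set B := Subtype.val '' (s' ⁻¹' leftSet q p) with hALdef
    have hARo : IsOpen AR := hA.isOpenMap_subtype_val _ ((isOpen_rightSet q p).preimage hs')
    have hALo : IsOpen AL := hA.isOpenMap_subtype_val _ ((isOpen_leftSet q p).preimage hs')
    have memAR : ∀ {b}, b ∈ AR → b ∈ A := by rintro b ⟨x, hx, rfl⟩; exact x.2
    have memAL : ∀ {b}, b ∈ AL → b ∈ A := by rintro b ⟨x, hx, rfl⟩; exact x.2
    have memR : ∀ {b} (h : b ∈ AR) (hbA : b ∈ A), s' ⟨b, hbA⟩ ∈ rightSet q p := by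
      rintro b ⟨⟨b', hb'⟩, hmem, rfl⟩ hbA
      exact hmem
    have memL : ∀ {b} (h : b ∈ AL) (hbA : b ∈ A), s' ⟨b, hbA⟩ ∈ leftSet q p := by
      rintro b ⟨⟨b', hb'⟩, hmem, rfl⟩ hbA
      exact hmem
    -- section of p over AR
    have hR : ∃ sg : AR → E, Continuous sg ∧ ∀ x : AR, p (sg x) = x.1 := by
      refine ⟨fun x => rightCoord q p ⟨s' ⟨x.1, memAR x.2⟩, memR x.2 _⟩, ?_, ?_⟩
      · exact (continuous_rightCoord q p).comp
          (Continuous.subtype_mk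
            (hs'.comp (Continuous.subtype_mk continuous_subtype_val _)) _)
      · intro x
        exact (joinMap_rightCoord q p ⟨s' ⟨x.1, memAR x.2⟩, memR x.2 _⟩).trans (hsec' _)
    -- section of `nJoinMap p m` over AL, feeding the induction hypothesis
    have hL : ∃ sg : AL → nJoin p m, Continuous sg ∧ ∀ x : AL, nJoinMap p m (sg x) = x.1 := by
      refine ⟨fun x => leftCoord q p ⟨s' ⟨x.1, memAL x.2⟩, memL x.2 _⟩, ?_, ?_⟩
      · exact (continuous_leftCoord q p).comp
          (Continuous.subtype_mk
            (hs'.comp (Continuous.subtype_mk continuous_subtype_val _)) _)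
      · intro x
        exact (joinMap_leftCoord q p ⟨s' ⟨x.1, memAL x.2⟩, memL x.2 _⟩).trans (hsec' _)
    obtain ⟨sL, hsLc, hsLs⟩ := hL
    obtain ⟨U', hU'o, hU'c, hU's⟩ := ih AL hALo sL hsLc hsLs
    refine ⟨Fin.snoc U' AR, ?_, ?_, ?_⟩
    · intro i
      induction i using Fin.lastCases with
      | last => rw [Fin.snoc_last]; exact hARo
      | cast i => rw [Fin.snoc_castSucc]; exact hU'o i
    · intro b hb
      rcases mem_left_or_right q p (s' ⟨b, hb⟩) with hmem | hmem
      · have hbL : b ∈ AL := ⟨⟨b, hb⟩, hmem, rfl⟩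
        obtain ⟨i, hi⟩ := hU'c b hbL
        exact ⟨i.castSucc, by rw [Fin.snoc_castSucc]; exact hi⟩
      · have hbR : b ∈ AR := ⟨⟨b, hb⟩, hmem, rfl⟩
        exact ⟨Fin.last (m+1), by rw [Fin.snoc_last]; exact hbR⟩
    · intro i
      induction i using Fin.lastCases with
      | last => rw [Fin.snoc_last]; exact hR
      | cast i => rw [Fin.snoc_castSucc]; exact hU's i

end Backward
section Forward
set_option linter.unusedSectionVars false

lemma exists_partition_functions {B : Type v} [TopologicalSpace B] [NormalSpace B] {n : ℕ}
    (U : Fin (n+1) → Set B) (hUo : ∀ i, IsOpen (U i)) (hUc : ∀ b, ∃ i, b ∈ U i) :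
    ∃ g : Fin (n+1) → B → ℝ, (∀ i, Continuous (g i)) ∧ (∀ i b, 0 ≤ g i b) ∧
      (∀ i b, g i b ≠ 0 → b ∈ U i) ∧ ∀ b, ∃ i, g i b = 1 := by
  obtain ⟨v, hvU, hvo, hvcl⟩ := exists_iUnion_eq_closure_subset hUo
    (fun x => Set.toFinite _) (by rw [Set.iUnion_eq_univ_iff]; exact hUc)
  have hex : ∀ i : Fin (n+1), ∃ f : C(B, ℝ),
      Set.EqOn f 0 (U i)ᶜ ∧ Set.EqOn f 1 (closure (v i)) ∧ ∀ x, f x ∈ Set.Icc (0:ℝ) 1 :=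
    fun i => exists_continuous_zero_one_of_isClosed (hUo i).isClosed_compl isClosed_closure
      (Set.disjoint_of_subset_right (hvcl i) disjoint_compl_left)
  choose f hf0 hf1 hf01 using hex
  refine ⟨fun i b => f i b, fun i => (f i).continuous, fun i b => (hf01 i b).1, ?_, ?_⟩
  · intro i b hb
    by_contra hU
    exact hb (hf0 i hU)
  · intro b
    have : b ∈ ⋃ i, v i := hvU ▸ Set.mem_univ b
    obtain ⟨i, hi⟩ := Set.mem_iUnion.mp this
    exact ⟨i, hf1 i (subset_closure hi)⟩

variable {E : Type u} {B : Type v} [TopologicalSpace E] [TopologicalSpace B] [NormalSpace B]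

lemma section_of_secat (p : E → B) (n : ℕ) (h : SecatLe p n) :
    ∃ s : B → nJoin p n, Continuous s ∧ ∀ b, nJoinMap p n (s b) = b := by
  classical
  obtain ⟨U, hUo, hUc, hUs⟩ := h
  obtain ⟨g, hgc, hg0, hgU, hg1⟩ := exists_partition_functions U hUo hUc
  set S : ℕ → B → ℝ :=
    fun k b => ∑ i ∈ Finset.univ.filter (fun i : Fin (n+1) => (i : ℕ) ≤ k), g i b with hSdef
  have hSc : ∀ k, Continuous (S k) := fun k => continuous_finset_sum _ (fun i _ => hgc i)
  have hS0 : ∀ k b, 0 ≤ S k b := fun k b => Finset.sum_nonneg fun i _ => hg0 i b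
  have hSsucc : ∀ (k : ℕ), k + 1 ≤ n → ∀ (hk : k + 1 < n + 1) (b : B),
      S (k+1) b = g ⟨k+1, hk⟩ b + S k b := by
    intro k hkn hk b
    have hins : Finset.univ.filter (fun i : Fin (n+1) => (i:ℕ) ≤ k+1)
        = insert (⟨k+1, hk⟩ : Fin (n+1))
            (Finset.univ.filter (fun i : Fin (n+1) => (i:ℕ) ≤ k)) := by
      ext i
      simp only [Finset.mem_filter, Finset.mem_univ, true_and, Finset.mem_insert, Fin.ext_iff]
      omega
    have hnm : (⟨k+1, hk⟩ : Fin (n+1)) ∉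
        Finset.univ.filter (fun i : Fin (n+1) => (i:ℕ) ≤ k) := by
      simp
    simp only [hSdef]
    rw [hins, Finset.sum_insert hnm]
  have key : ∀ k : ℕ, k + 1 ≤ n + 1 → ∃ sg : {b : B | 0 < S k b} → nJoin p k,
      Continuous sg ∧ ∀ x, nJoinMap p k (sg x) = x.1 := by
    intro k
    induction k with
    | zero =>
      intro _
      obtain ⟨s0, hs0c, hs0s⟩ := hUs 0
      have hS00 : ∀ b, S 0 b = g 0 b := by
        intro b
        have h0 : Finset.univ.filter (fun i : Fin (n+1) => (i:ℕ) ≤ 0) = {0} := by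
          ext i
          simp only [Finset.mem_filter, Finset.mem_univ, true_and, Finset.mem_singleton,
            Fin.ext_iff, Fin.val_zero]
          omega
        simp only [hSdef]
        rw [h0, Finset.sum_singleton]
      have hmem : ∀ x : {b : B | 0 < S 0 b}, x.1 ∈ U 0 := by
        intro x
        apply hgU 0
        have hx := x.2
        rw [Set.mem_setOf_eq, hS00 x.1] at hx
        exact ne_of_gt hx
      exact ⟨fun x => s0 ⟨x.1, hmem x⟩,
        hs0c.comp (Continuous.subtype_mk continuous_subtype_val _),
        fun x => hs0s _⟩
    | succ k ih =>
      intro hk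
      obtain ⟨sk, hskc, hsks⟩ := ih (by omega)
      have hk' : k + 1 < n + 1 := by omega
      obtain ⟨sk1, hsk1c, hsk1s⟩ := hUs ⟨k+1, hk'⟩
      set gg : B → ℝ := g ⟨k+1, hk'⟩ with hggdef
      have hsum : ∀ b, S (k+1) b = gg b + S k b := fun b => hSsucc k (by omega) hk' b
      have hgg0 : ∀ b, 0 ≤ gg b := fun b => hg0 _ b
      set q : nJoin p k → B := nJoinMap p k with hqdef
      -- the clamped parameter
      set tt : B → I := fun b =>
        Set.projIcc (0:ℝ) 1 zero_le_one ((6 * gg b - 2 * S (k+1) b) / S (k+1) b) with httdef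
      -- membership facts
      have pf1 : ∀ b : B, 0 < S (k+1) b → 3 * gg b ≤ S (k+1) b → 0 < S k b := by
        intro b hb h1
        have h := hsum b
        have := hgg0 b
        have := hS0 k b
        linarith
      have pfU : ∀ b : B, 0 < gg b → b ∈ U ⟨k+1, hk'⟩ :=
        fun b hb => hgU _ b (ne_of_gt hb)
      have pfgg2 : ∀ b : B, ¬(3 * gg b ≤ S (k+1) b) → 0 < gg b := by
        intro b h1
        have h := hsum b
        have := hS0 k b
        by_contra h'
        push_neg at h'
        have := hgg0 b
        have hgg : gg b = 0 := le_antisymm h' this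
        apply h1; rw [h, hgg]; linarith
      have pfSk2 : ∀ b : B, ¬(3 * gg b ≤ S (k+1) b) → 2 * gg b ≤ S (k+1) b → 0 < S k b := by
        intro b h1 h2
        have h := hsum b
        have := pfgg2 b h1
        linarith
      have pfgg3 : ∀ b : B, ¬(2 * gg b ≤ S (k+1) b) → 0 < gg b := by
        intro b h2
        have h := hsum b
        have := hS0 k b
        by_contra h'
        push_neg at h'
        have := hgg0 b
        have hgg : gg b = 0 := le_antisymm h' this
        apply h2; rw [h, hgg]; linarith
      have pfFib : ∀ (b : B) (hb1 : 0 < S k b) (hb2 : b ∈ U ⟨k+1, hk'⟩),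
          q ((sk ⟨b, hb1⟩, sk1 ⟨b, hb2⟩) : nJoin p k × E).1
            = p ((sk ⟨b, hb1⟩, sk1 ⟨b, hb2⟩) : nJoin p k × E).2 :=
        fun b hb1 hb2 => (hsks ⟨b, hb1⟩).trans (hsk1s ⟨b, hb2⟩).symm
      refine ⟨fun x =>
        if h1 : 3 * gg x.1 ≤ S (k+1) x.1 then
          mkLeft q p (sk ⟨x.1, pf1 x.1 x.2 h1⟩)
        else if h2 : 2 * gg x.1 ≤ S (k+1) x.1 then
          mkMix q p (⟨(sk ⟨x.1, pfSk2 x.1 h1 h2⟩, sk1 ⟨x.1, pfU x.1 (pfgg2 x.1 h1)⟩),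
            pfFib x.1 (pfSk2 x.1 h1 h2) (pfU x.1 (pfgg2 x.1 h1))⟩, tt x.1)
        else mkRight q p (sk1 ⟨x.1, pfU x.1 (pfgg3 x.1 h2)⟩), ?_, ?_⟩
      · -- continuity by gluing over three open pieces
        rw [continuous_iff_continuousAt]
        intro x
        have hx := x.2
        simp only [Set.mem_setOf_eq] at hx
        have hcov : 3 * gg x.1 < S (k+1) x.1 ∨
            (0 < gg x.1 ∧ 3 * gg x.1 < 2 * S (k+1) x.1) ∨ S (k+1) x.1 < 2 * gg x.1 := by
          by_cases c0 : 3 * gg x.1 < S (k+1) x.1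
          · exact Or.inl c0
          · push_neg at c0
            have hggpos : 0 < gg x.1 := by nlinarith
            by_cases c1 : 3 * gg x.1 < 2 * S (k+1) x.1
            · exact Or.inr (Or.inl ⟨hggpos, c1⟩)
            · push_neg at c1
              refine Or.inr (Or.inr ?_)
              nlinarith
        rcases hcov with hc | hc | hc
        · -- left pure piece
          refine continuousAt_glue _ (isOpen_lt (continuous_const.mul (hgc _)) (hSc (k+1)))
            ?_ ?_ x hc
          · intro b hb
            simp only [Set.mem_setOf_eq, Pi.mul_apply] at hb ⊢
            have := hgg0 b
            linarith
          · refine ⟨fun y => mkLeft q p (sk ⟨y.1, ?_⟩), ?_, ?_⟩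
            · have hy : 3 * gg y.1 < S (k+1) y.1 := y.2
              have hyD : 0 < S (k+1) y.1 := by
                have := hgg0 y.1
                linarith
              exact pf1 y.1 hyD hy.le
            · exact (continuous_mkLeft q p).comp
                (hskc.comp (Continuous.subtype_mk continuous_subtype_val _))
            · intro b hb
              have hb' : 3 * gg b < S (k+1) b := hb
              refine Eq.trans ?_ (dif_pos hb'.le).symm
              rfl
        · -- mixed piece
          refine continuousAt_glue _
            (IsOpen.inter (isOpen_lt continuous_const (hgc _))
              (isOpen_lt (continuous_const.mul (hgc _)) (continuous_const.mul (hSc (k+1)))))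
            ?_ ?_ x hc
          · intro b hb
            obtain ⟨hb1, hb2⟩ := hb
            simp only [Set.mem_setOf_eq] at hb1 hb2 ⊢
            have h := hsum b
            have := hS0 k b
            linarith
          · have hySpos : ∀ (y : B), 0 < gg y → 3 * gg y < 2 * S (k+1) y →
                0 < S (k+1) y := by
              intro y hy1 hy2
              have h := hsum y
              have := hS0 k y
              linarith
            have hySk : ∀ (y : B), 0 < gg y → 3 * gg y < 2 * S (k+1) y → 0 < S k y := by
              intro y hy1 hy2
              have h := hsum y
              linarith
            refine ⟨fun y => mkMix q p (⟨(sk ⟨y.1, hySk y.1 y.2.1 y.2.2⟩,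
                sk1 ⟨y.1, pfU y.1 y.2.1⟩),
                pfFib y.1 (hySk y.1 y.2.1 y.2.2) (pfU y.1 y.2.1)⟩, tt y.1), ?_, ?_⟩
            · refine (continuous_mkMix q p).comp (Continuous.prodMk ?_ ?_)
              · exact Continuous.subtype_mk
                  (Continuous.prodMk
                    (hskc.comp (Continuous.subtype_mk continuous_subtype_val _))
                    (hsk1c.comp (Continuous.subtype_mk continuous_subtype_val _))) _
              · simp only [httdef]
                refine continuous_projIcc.comp ?_
                refine Continuous.div ?_ ?_ ?_
                · exact ((continuous_const.mul ((hgc _).comp continuous_subtype_val)).sub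
                    (continuous_const.mul ((hSc (k+1)).comp continuous_subtype_val)))
                · exact (hSc (k+1)).comp continuous_subtype_val
                · intro y
                  exact ne_of_gt (hySpos y.1 y.2.1 y.2.2)
            · intro b hb
              have hb1 : 0 < gg b := hb.1
              have hb2 : 3 * gg b < 2 * S (k+1) b := hb.2
              have hSpos := hySpos b hb1 hb2
              by_cases h1 : 3 * gg b ≤ S (k+1) b
              · refine Eq.trans ?_ (dif_pos h1).symm
                dsimp only
                have ht0 : tt b = 0 := by
                  simp only [httdef]
                  have hnum : (6 * gg b - 2 * S (k+1) b) / S (k+1) b ≤ 0 :=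
                    div_nonpos_iff.mpr (Or.inr ⟨by linarith, hSpos.le⟩)
                  exact Set.projIcc_of_le_left _ hnum
                rw [ht0]
                exact mkMix_zero q p _
              · by_cases h2 : 2 * gg b ≤ S (k+1) b
                · exact ((dif_neg h1).trans (dif_pos h2)).symm
                · refine Eq.trans ?_ ((dif_neg h1).trans (dif_neg h2)).symm
                  dsimp only
                  push_neg at h2
                  have ht1 : tt b = 1 := by
                    simp only [httdef]
                    have hnum : 1 ≤ (6 * gg b - 2 * S (k+1) b) / S (k+1) b :=
                      (one_le_div hSpos).mpr (by linarith)
                    exact Set.projIcc_of_right_le _ hnum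
                  rw [ht1]
                  exact mkMix_one q p _
        · -- right pure piece
          refine continuousAt_glue _ (isOpen_lt (hSc (k+1)) (continuous_const.mul (hgc _)))
            ?_ ?_ x hc
          · intro b hb
            have hb' : S (k+1) b < 2 * gg b := hb
            have h := hsum b
            have := hS0 k b
            have := pfgg3 b (by intro hcon; linarith)
            simp only [Set.mem_setOf_eq]
            linarith
          · refine ⟨fun y => mkRight q p (sk1 ⟨y.1, pfU y.1
              (pfgg3 y.1 (by have hy : S (k+1) y.1 < 2 * gg y.1 := y.2; intro hcon; linarith))⟩),
              ?_, ?_⟩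
            · exact (continuous_mkRight q p).comp
                (hsk1c.comp (Continuous.subtype_mk continuous_subtype_val _))
            · intro b hb
              have hb' : S (k+1) b < 2 * gg b := hb
              have hggpos : 0 < gg b := pfgg3 b (by intro hcon; linarith)
              exact ((dif_neg (show ¬(3 * gg b ≤ S (k+1) b) by intro hcon; linarith)).trans
                (dif_neg (show ¬(2 * gg b ≤ S (k+1) b) by intro hcon; linarith))).symm
      · -- the section property
        intro x
        by_cases h1 : 3 * gg x.1 ≤ S (k+1) x.1
        · refine (congrArg (nJoinMap p (k+1)) (dif_pos h1)).trans ?_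
          exact hsks _
        · by_cases h2 : 2 * gg x.1 ≤ S (k+1) x.1
          · refine (congrArg (nJoinMap p (k+1)) ((dif_neg h1).trans (dif_pos h2))).trans ?_
            exact hsks _
          · refine (congrArg (nJoinMap p (k+1)) ((dif_neg h1).trans (dif_neg h2))).trans ?_
            exact hsk1s _
  have hall : ∀ b, 0 < S n b := by
    intro b
    obtain ⟨i, hi⟩ := hg1 b
    have hmem : i ∈ Finset.univ.filter (fun i : Fin (n+1) => (i:ℕ) ≤ n) := by
      simp only [Finset.mem_filter, Finset.mem_univ, true_and]
      omega
    have hle : g i b ≤ S n b := Finset.single_le_sum (fun j _ => hg0 j b) hmem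
    rw [hi] at hle
    linarith
  obtain ⟨sg, hsgc, hsgs⟩ := key n (by omega)
  exact ⟨fun b => sg ⟨b, hall b⟩,
    hsgc.comp (Continuous.subtype_mk continuous_id _), fun b => hsgs _⟩

end Forward
/-- For a Hurewicz fibration `p : E → B` with normal base `B`,
`secat p ≤ n` if and only if the `n`-th join map `jⁿp : *ⁿ_B E → B` admits a
continuous section. -/
theorem secatLe_iff_nJoinMap_section {E : Type u} {B : Type v}
    [TopologicalSpace E] [TopologicalSpace B] [NormalSpace B]
    (p : E → B) (hp : IsHurewiczFibration.{u, v, w} p) (n : ℕ) :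
    SecatLe p n ↔ ∃ s : B → nJoin p n, Continuous s ∧ ∀ b, nJoinMap p n (s b) = b := by
  constructor
  · exact fun h => section_of_secat p n h
  · rintro ⟨s, hs, hsec⟩
    obtain ⟨U, hUo, hUc, hUs⟩ := secat_of_section_on_open p n Set.univ isOpen_univ
      (fun x => s x.1) (hs.comp continuous_subtype_val) (fun x => hsec x.1)
    exact ⟨U, hUo, fun b => hUc b (Set.mem_univ b), hUs⟩
end

section
/- Let p: E → B be a Hurewicz fibration and n ≥ 0. Form the pullback (*ⁿ_B E) ×_B E = {(z,e) : jⁿp(z) = p(e)} of p along the n-th join map jⁿp, and let p̄ₙ: (*ⁿ_B E) ×_B E → *ⁿ_B E be the first projection. Then secat p̄ₙ ≤ n. -/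
open unitInterval

universe u v w

section FJAux

universe u' v' w'
variable {J : Type u'} {E : Type v'} {B : Type w'} [TopologicalSpace J] [TopologicalSpace E]
  (q : J → B) (p : E → B)

private lemma I_zero_ne_one' : (0 : I) ≠ 1 := by simp [Subtype.ext_iff]

/-- Partial `J`-coordinate of a point of the prejoin. -/
noncomputable def cJfun : PreJoin q p → Option J
  | Sum.inl w => if w.2 = (1 : I) then none else some w.1.1.1
  | Sum.inr (Sum.inl z) => some z
  | Sum.inr (Sum.inr _) => none

lemma cJfun_rel : ∀ a b, JoinRel q p a b → cJfun q p a = cJfun q p b := by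
  rintro a b (⟨z⟩ | ⟨z⟩) <;> simp [cJfun, I_zero_ne_one']

/-- Partial `J`-coordinate on the fiber join. -/
noncomputable def CJ : FiberJoin q p → Option J := Quot.lift (cJfun q p) (cJfun_rel q p)

lemma CJ_mk (a : PreJoin q p) : CJ q p (Quot.mk (JoinRel q p) a) = cJfun q p a := rfl

/-- Partial `E`-coordinate of a point of the prejoin. -/
noncomputable def cEfun : PreJoin q p → Option E
  | Sum.inl w => if w.2 = (0 : I) then none else some w.1.1.2
  | Sum.inr (Sum.inl _) => none
  | Sum.inr (Sum.inr e) => some e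

lemma cEfun_rel : ∀ a b, JoinRel q p a b → cEfun q p a = cEfun q p b := by
  rintro a b (⟨z⟩ | ⟨z⟩) <;> simp [cEfun, I_zero_ne_one'.symm]

/-- Partial `E`-coordinate on the fiber join. -/
noncomputable def CE : FiberJoin q p → Option E := Quot.lift (cEfun q p) (cEfun_rel q p)

lemma CE_mk (a : PreJoin q p) : CE q p (Quot.mk (JoinRel q p) a) = cEfun q p a := rfl

def liftPre (S : Set J) : PreJoin q p → Prop
  | Sum.inl w => w.1.1.1 ∈ S ∧ w.2 ≠ 1
  | Sum.inr (Sum.inl z) => z ∈ S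
  | Sum.inr (Sum.inr _) => False

lemma liftPre_rel (S : Set J) :
    ∀ a b, JoinRel q p a b → liftPre q p S a = liftPre q p S b := by
  rintro a b (⟨z⟩ | ⟨z⟩) <;> simp [liftPre, I_zero_ne_one']

def liftSet (S : Set J) : Set (FiberJoin q p) :=
  fun x => Quot.lift (liftPre q p S) (liftPre_rel q p S) x

def lastPre (W : Set E) : PreJoin q p → Prop
  | Sum.inl w => w.2 ≠ 0 ∧ w.1.1.2 ∈ W
  | Sum.inr (Sum.inl _) => False
  | Sum.inr (Sum.inr e) => e ∈ W

lemma lastPre_rel (W : Set E) :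
    ∀ a b, JoinRel q p a b → lastPre q p W a = lastPre q p W b := by
  rintro a b (⟨z⟩ | ⟨z⟩) <;> simp [lastPre, I_zero_ne_one'.symm]

def lastSet (W : Set E) : Set (FiberJoin q p) :=
  fun x => Quot.lift (lastPre q p W) (lastPre_rel q p W) x

lemma isOpen_liftSet {S : Set J} (hS : IsOpen S) : IsOpen (liftSet q p S) := by
  apply isQuotientMap_quot_mk.isOpen_preimage.mp
  show IsOpen {a : PreJoin q p | liftPre q p S a}
  refine isOpen_sum_iff.mpr ?_
  constructor
  · show IsOpen {w : {z : J × E // q z.1 = p z.2} × I | w.1.1.1 ∈ S ∧ w.2 ≠ 1}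
    exact (hS.preimage (by fun_prop)).inter ((isOpen_ne (x := (1:I))).preimage continuous_snd)
  · rw [isOpen_sum_iff]
    exact ⟨hS, isOpen_empty⟩

lemma isOpen_lastSet {W : Set E} (hW : IsOpen W) : IsOpen (lastSet q p W) := by
  apply isQuotientMap_quot_mk.isOpen_preimage.mp
  show IsOpen {a : PreJoin q p | lastPre q p W a}
  refine isOpen_sum_iff.mpr ?_
  constructor
  · show IsOpen {w : {z : J × E // q z.1 = p z.2} × I | w.2 ≠ 0 ∧ w.1.1.2 ∈ W}
    exact ((isOpen_ne (x := (0:I))).preimage continuous_snd).inter (hW.preimage (by fun_prop))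
  · rw [isOpen_sum_iff]
    exact ⟨isOpen_empty, hW⟩

lemma liftSet_spec {S : Set J} :
    ∀ x ∈ liftSet q p S, ∃ z, CJ q p x = some z ∧ z ∈ S ∧ joinMap q p x = q z := by
  intro x hx
  obtain ⟨a, rfl⟩ := Quot.exists_rep x
  rcases a with ⟨w, t⟩ | z | e
  · obtain ⟨h1, h2⟩ := hx
    exact ⟨w.1.1, by show cJfun q p (Sum.inl (w, t)) = _; simp [cJfun, h2], h1, rfl⟩
  · exact ⟨z, rfl, hx, rfl⟩
  · exact (hx : False).elim

lemma lastSet_spec (W : Set E) :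
    ∀ x ∈ lastSet q p W, ∃ e, CE q p x = some e ∧ e ∈ W ∧ joinMap q p x = p e := by
  intro x hx
  obtain ⟨a, rfl⟩ := Quot.exists_rep x
  rcases a with ⟨w, t⟩ | z | e
  · obtain ⟨h1, h2⟩ := hx
    exact ⟨w.1.2, by show cEfun q p (Sum.inl (w, t)) = _; simp [cEfun, h1], h2, w.2⟩
  · exact (hx : False).elim
  · exact ⟨e, rfl, hx, rfl⟩

lemma mem_liftSet_inter {S T : Set J} {x : FiberJoin q p} (hx : x ∈ liftSet q p S) {z : J}
    (hz : CJ q p x = some z) : x ∈ liftSet q p (T ∩ S) ↔ z ∈ T := by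
  obtain ⟨a, rfl⟩ := Quot.exists_rep x
  rcases a with ⟨w, t⟩ | z' | e
  · obtain ⟨h1, h2⟩ := hx
    have hz' : some w.1.1 = some z := by
      change cJfun q p (Sum.inl (w, t)) = _ at hz
      simpa [cJfun, h2] using hz
    obtain rfl := Option.some.inj hz'
    exact ⟨fun h => h.1.1, fun h => ⟨⟨h, h1⟩, h2⟩⟩
  · obtain rfl := Option.some.inj (hz : some z' = some z)
    exact ⟨fun h => h.1, fun h => ⟨h, hx⟩⟩
  · exact (hx : False).elim

lemma mem_lastSet {x : FiberJoin q p} (hx : x ∈ lastSet q p Set.univ) {e : E}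
    (he : CE q p x = some e) (W : Set E) : x ∈ lastSet q p W ↔ e ∈ W := by
  obtain ⟨a, rfl⟩ := Quot.exists_rep x
  rcases a with ⟨w, t⟩ | z | e'
  · obtain ⟨h1, h2⟩ := hx
    have he' : some w.1.2 = some e := by
      change cEfun q p (Sum.inl (w, t)) = _ at he
      simpa [cEfun, h1] using he
    obtain rfl := Option.some.inj he'
    exact ⟨fun h => h.2, fun h => ⟨h1, h⟩⟩
  · exact (hx : False).elim
  · obtain rfl := Option.some.inj (he : some e' = some e)
    exact Iff.rfl

noncomputable def liftSec {S : Set J} (s : S → E) : liftSet q p S → E :=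
  fun x => s ⟨(liftSet_spec q p x.1 x.2).choose, (liftSet_spec q p x.1 x.2).choose_spec.2.1⟩

lemma liftSec_proj {S : Set J} (s : S → E) (hs : ∀ y : S, p (s y) = q y)
    (x : liftSet q p S) : p (liftSec q p s x) = joinMap q p x.1 := by
  have h := (liftSet_spec q p x.1 x.2).choose_spec
  show p (s _) = _
  rw [hs]
  exact h.2.2.symm

lemma continuous_liftSec {S : Set J} (hS : IsOpen S) {s : S → E} (hs : Continuous s) :
    Continuous (liftSec q p s) := by
  rw [continuous_def]
  intro W hW
  obtain ⟨O, hO, hOeq⟩ := isOpen_induced_iff.mp (hW.preimage hs)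
  have key : liftSec q p s ⁻¹' W = Subtype.val ⁻¹' (liftSet q p (O ∩ S)) := by
    ext x
    have h := (liftSet_spec q p x.1 x.2).choose_spec
    constructor
    · intro hxW
      refine (mem_liftSet_inter q p x.2 h.1).mpr ?_
      have hmem : (⟨(liftSet_spec q p x.1 x.2).choose, h.2.1⟩ : S) ∈ s ⁻¹' W := hxW
      rw [← hOeq] at hmem
      exact hmem
    · intro hmem
      have hc : (liftSet_spec q p x.1 x.2).choose ∈ O :=
        (mem_liftSet_inter q p x.2 h.1).mp hmem
      have : (⟨(liftSet_spec q p x.1 x.2).choose, h.2.1⟩ : S) ∈ Subtype.val ⁻¹' O := hc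
      rw [hOeq] at this
      exact this
  rw [key]
  exact (isOpen_liftSet q p (hO.inter hS)).preimage continuous_subtype_val

noncomputable def lastSec : lastSet q p Set.univ → E :=
  fun x => (lastSet_spec q p Set.univ x.1 x.2).choose

lemma lastSec_proj (x : lastSet q p Set.univ) : p (lastSec q p x) = joinMap q p x.1 :=
  ((lastSet_spec q p Set.univ x.1 x.2).choose_spec.2.2).symm

lemma continuous_lastSec : Continuous (lastSec q p) := by
  rw [continuous_def]
  intro W hW
  have key : lastSec q p ⁻¹' W = Subtype.val ⁻¹' (lastSet q p W) := by
    ext x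
    have h := (lastSet_spec q p Set.univ x.1 x.2).choose_spec
    exact (mem_lastSet q p x.2 h.1 W).symm
  rw [key]
  exact (isOpen_lastSet q p hW).preimage continuous_subtype_val

lemma cover_fiberJoin {ι : Type*} (U : ι → Set J) (hcov : ∀ z, ∃ i, z ∈ U i)
    (x : FiberJoin q p) : x ∈ lastSet q p Set.univ ∨ ∃ i, x ∈ liftSet q p (U i) := by
  obtain ⟨a, rfl⟩ := Quot.exists_rep x
  rcases a with ⟨w, t⟩ | z | e
  · by_cases ht : t = 0
    · subst ht
      obtain ⟨i, hi⟩ := hcov w.1.1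
      exact Or.inr ⟨i, hi, I_zero_ne_one'⟩
    · exact Or.inl ⟨ht, trivial⟩
  · obtain ⟨i, hi⟩ := hcov z
    exact Or.inr ⟨i, hi⟩
  · exact Or.inl trivial

end FJAux

lemma nJoin_cover {E : Type u} {B : Type v} [TopologicalSpace E] [TopologicalSpace B]
    (p : E → B) (n : ℕ) :
    ∃ U : Fin (n + 1) → Set (nJoin p n), (∀ i, IsOpen (U i)) ∧ (∀ b, ∃ i, b ∈ U i) ∧
      ∀ i, ∃ s : U i → E, Continuous s ∧ ∀ x : U i, p (s x) = nJoinMap p n x := by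
  induction n with
  | zero =>
      exact ⟨fun _ => Set.univ, fun _ => isOpen_univ, fun b => ⟨0, trivial⟩,
        fun _ => ⟨Subtype.val, continuous_subtype_val, fun x => rfl⟩⟩
  | succ n ih =>
      obtain ⟨U, hU, hcov, hsec⟩ := ih
      set q := nJoinMap p n with hq
      show ∃ V : Fin (n + 2) → Set (FiberJoin q p), (∀ i, IsOpen (V i)) ∧
        (∀ b, ∃ i, b ∈ V i) ∧
        ∀ i, ∃ s : V i → E, Continuous s ∧ ∀ x : V i, p (s x) = joinMap q p x
      refine ⟨Fin.snoc (fun i => liftSet q p (U i)) (lastSet q p Set.univ), ?_, ?_, ?_⟩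
      · intro i
        refine Fin.lastCases ?_ (fun j => ?_) i
        · rw [Fin.snoc_last]; exact isOpen_lastSet q p isOpen_univ
        · rw [Fin.snoc_castSucc]; exact isOpen_liftSet q p (hU j)
      · intro b
        rcases cover_fiberJoin q p U hcov b with h | ⟨i, h⟩
        · exact ⟨Fin.last _, by rw [Fin.snoc_last]; exact h⟩
        · exact ⟨i.castSucc, by rw [Fin.snoc_castSucc]; exact h⟩
      · intro i
        refine Fin.lastCases ?_ (fun j => ?_) i
        · rw [Fin.snoc_last]
          exact ⟨lastSec q p, continuous_lastSec q p, fun x => lastSec_proj q p x⟩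
        · rw [Fin.snoc_castSucc]
          obtain ⟨s, hs, hps⟩ := hsec j
          exact ⟨liftSec q p s, continuous_liftSec q p (hU j) hs,
            fun x => liftSec_proj q p s hps x⟩

/-- For a Hurewicz fibration `p : E → B`, the pullback
`p̄ₙ : (*ⁿ_B E) ×_B E → *ⁿ_B E` of `p` along the `n`-th join map has
sectional category at most `n`. -/
theorem secatLe_pullback_nJoinMap {E : Type u} {B : Type v}
    [TopologicalSpace E] [TopologicalSpace B]
    (p : E → B) (hp : IsHurewiczFibration.{u, v, w} p) (n : ℕ) :
    SecatLe (fun z : {x : nJoin p n × E // nJoinMap p n x.1 = p x.2} =>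
      (z : nJoin p n × E).1) n := by
  obtain ⟨U, hU, hcov, hsec⟩ := nJoin_cover p n
  refine ⟨U, hU, hcov, fun i => ?_⟩
  obtain ⟨s, hs, hps⟩ := hsec i
  refine ⟨fun x => ⟨((x : nJoin p n), s x), (hps x).symm⟩, ?_, fun x => rfl⟩
  exact (continuous_subtype_val.prodMk hs).subtype_mk _
end

section
/- Let p: E → B be a continuous map and n ≥ 0. Then the n-fold join *ⁿ_B E can be covered by n+1 open subsets U₀, …, Uₙ such that for each i there exists a continuous map σᵢ: Uᵢ → E with p ∘ σᵢ equal to the restriction of the n-th join map jⁿp to Uᵢ. -/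
open unitInterval

universe u v w

section AuxLemmas

open Set Topology

/-- Continuity of a map on a subtype of a sum type can be checked on each summand. -/
theorem continuous_subtype_sum_cases {α β γ : Type*} [TopologicalSpace α] [TopologicalSpace β]
    [TopologicalSpace γ] {P : α ⊕ β → Prop} (f : {x // P x} → γ)
    (h₁ : Continuous fun a : {a : α // P (Sum.inl a)} => f ⟨Sum.inl a.1, a.2⟩)
    (h₂ : Continuous fun b : {b : β // P (Sum.inr b)} => f ⟨Sum.inr b.1, b.2⟩) :
    Continuous f := by
  set e : {a : α // P (Sum.inl a)} ⊕ {b : β // P (Sum.inr b)} → {x // P x} :=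
    Sum.elim (fun a => ⟨Sum.inl a.1, a.2⟩) (fun b => ⟨Sum.inr b.1, b.2⟩) with he
  have hcont : Continuous e :=
    Continuous.sumElim (Continuous.subtype_mk (continuous_inl.comp continuous_subtype_val) _)
      (Continuous.subtype_mk (continuous_inr.comp continuous_subtype_val) _)
  have hsurj : Function.Surjective e := by
    rintro ⟨x | y, h⟩
    · exact ⟨Sum.inl ⟨x, h⟩, rfl⟩
    · exact ⟨Sum.inr ⟨y, h⟩, rfl⟩
  have hopen : IsOpenMap e := by
    intro O hO
    rw [isOpen_sum_iff] at hO
    obtain ⟨W₁, hW₁, hpre₁⟩ := isOpen_induced_iff.mp hO.1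
    obtain ⟨W₂, hW₂, hpre₂⟩ := isOpen_induced_iff.mp hO.2
    have himg : e '' O = Subtype.val ⁻¹' (Sum.inl '' W₁ ∪ Sum.inr '' W₂) := by
      ext ⟨x | y, h⟩
      · simp only [Set.mem_image, Set.mem_preimage, Set.mem_union]
        constructor
        · rintro ⟨a | b, ho, hea⟩
          · have hval : (Sum.inl a.1 : α ⊕ β) = Sum.inl x := congrArg Subtype.val hea
            have hax : a.1 = x := by injection hval
            have h2 : a ∈ Subtype.val ⁻¹' W₁ := by rw [hpre₁]; exact ho
            rw [Set.mem_preimage, hax] at h2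
            exact Or.inl ⟨x, h2, rfl⟩
          · have hval : (Sum.inr b.1 : α ⊕ β) = Sum.inl x := congrArg Subtype.val hea
            simp at hval
        · rintro (⟨w, hw, hwe⟩ | ⟨w, hw, hwe⟩)
          · have hwx : w = x := by injection hwe
            refine ⟨Sum.inl ⟨x, h⟩, ?_, rfl⟩
            have h2 : (⟨x, h⟩ : {a : α // P (Sum.inl a)}) ∈ Subtype.val ⁻¹' W₁ := by
              rw [Set.mem_preimage]; exact hwx ▸ hw
            rw [hpre₁] at h2
            exact h2
          · simp at hwe
      · simp only [Set.mem_image, Set.mem_preimage, Set.mem_union]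
        constructor
        · rintro ⟨a | b, ho, hea⟩
          · have hval : (Sum.inl a.1 : α ⊕ β) = Sum.inr y := congrArg Subtype.val hea
            simp at hval
          · have hval : (Sum.inr b.1 : α ⊕ β) = Sum.inr y := congrArg Subtype.val hea
            have hby : b.1 = y := by injection hval
            have h2 : b ∈ Subtype.val ⁻¹' W₂ := by rw [hpre₂]; exact ho
            rw [Set.mem_preimage, hby] at h2
            exact Or.inr ⟨y, h2, rfl⟩
        · rintro (⟨w, hw, hwe⟩ | ⟨w, hw, hwe⟩)
          · simp at hwe
          · have hwy : w = y := by injection hwe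
            refine ⟨Sum.inr ⟨y, h⟩, ?_, rfl⟩
            have h2 : (⟨y, h⟩ : {b : β // P (Sum.inr b)}) ∈ Subtype.val ⁻¹' W₂ := by
              rw [Set.mem_preimage]; exact hwy ▸ hw
            rw [hpre₂] at h2
            exact h2
    rw [himg]
    exact ((isOpenMap_inl W₁ hW₁).union (isOpenMap_inr W₂ hW₂)).preimage continuous_subtype_val
  have hq : IsQuotientMap e := hopen.isQuotientMap hcont hsurj
  rw [hq.continuous_iff]
  have : f ∘ e = Sum.elim (fun a : {a : α // P (Sum.inl a)} => f ⟨Sum.inl a.1, a.2⟩)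
      (fun b : {b : β // P (Sum.inr b)} => f ⟨Sum.inr b.1, b.2⟩) := by
    funext z; rcases z with a | b <;> rfl
  rw [this]
  exact h₁.sumElim h₂

/-- A map on an open subset of a quotient is continuous if its composition with the
quotient map (restricted to the preimage) is continuous. -/
theorem continuous_of_comp_quot_mk {α γ : Type*} [TopologicalSpace α] [TopologicalSpace γ]
    {r : α → α → Prop} {V : Set (Quot r)} (hV : IsOpen V) (f : V → γ)
    (h : Continuous fun w : (Quot.mk r ⁻¹' V) => f ⟨Quot.mk r w.1, w.2⟩) : Continuous f := by
  rw [continuous_def]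
  intro O hO
  have key : IsOpen (Subtype.val '' (f ⁻¹' O) : Set (Quot r)) := by
    rw [← isQuotientMap_quot_mk.isOpen_preimage]
    have himg : Quot.mk r ⁻¹' (Subtype.val '' (f ⁻¹' O)) =
        Subtype.val '' ((fun w : (Quot.mk r ⁻¹' V) => f ⟨Quot.mk r w.1, w.2⟩) ⁻¹' O) := by
      ext w
      constructor
      · rintro ⟨v, hvO, hveq⟩
        have hwV : Quot.mk r w ∈ V := by rw [← hveq]; exact v.2
        refine ⟨⟨w, hwV⟩, ?_, rfl⟩
        have hv : v = ⟨Quot.mk r w, hwV⟩ := Subtype.ext hveq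
        show f ⟨Quot.mk r w, hwV⟩ ∈ O
        rwa [← hv]
      · rintro ⟨u, huO, hueq⟩
        refine ⟨⟨Quot.mk r u.1, u.2⟩, huO, ?_⟩
        show Quot.mk r u.1 = Quot.mk r w
        rw [hueq]
    rw [himg]
    exact ((hV.preimage continuous_quot_mk).isOpenMap_subtype_val) _ (h.isOpen_preimage O hO)
  have hfp : f ⁻¹' O = Subtype.val ⁻¹' (Subtype.val '' (f ⁻¹' O)) :=
    (Set.preimage_image_eq _ Subtype.val_injective).symm
  rw [hfp]
  exact key.preimage continuous_subtype_val

/-- Produce an open subset of a quotient with a continuous map on it from saturated data. -/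
theorem exists_open_sec {α γ : Type*} [TopologicalSpace α] [TopologicalSpace γ]
    (r : α → α → Prop) (pred : α → Prop)
    (hsat : ∀ a b, r a b → pred a = pred b)
    (hopen : IsOpen {w | pred w})
    (f : {w // pred w} → γ) (hf : Continuous f)
    (hconst : ∀ w w' (h : pred w) (h' : pred w'),
      Quot.mk r w = Quot.mk r w' → f ⟨w, h⟩ = f ⟨w', h'⟩) :
    ∃ (V : Set (Quot r)) (sec : V → γ), IsOpen V ∧ Continuous sec ∧
      (∀ w, Quot.mk r w ∈ V ↔ pred w) ∧
      ∀ (v : V) (w : α) (h : pred w), v.1 = Quot.mk r w → sec v = f ⟨w, h⟩ := by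
  set V : Set (Quot r) := {x | Quot.lift pred hsat x} with hVdef
  have hmem : ∀ w, Quot.mk r w ∈ V ↔ pred w := fun w => Iff.rfl
  have hVopen : IsOpen V := by
    rw [← isQuotientMap_quot_mk.isOpen_preimage]
    exact hopen
  have hrep : ∀ v : V, pred (Quot.exists_rep v.1).choose := by
    intro v
    have h2 := (Quot.exists_rep v.1).choose_spec
    have h3 := v.2
    rw [← h2] at h3
    exact h3
  set sec : V → γ := fun v => f ⟨(Quot.exists_rep v.1).choose, hrep v⟩ with hsec
  have hspec : ∀ (v : V) (w : α) (h : pred w), v.1 = Quot.mk r w → sec v = f ⟨w, h⟩ := by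
    intro v w h hw
    exact hconst _ _ _ _ (by rw [(Quot.exists_rep v.1).choose_spec, hw])
  refine ⟨V, sec, hVopen, ?_, hmem, hspec⟩
  apply continuous_of_comp_quot_mk hVopen
  have heq : (fun w : (Quot.mk r ⁻¹' V) => sec ⟨Quot.mk r w.1, w.2⟩) =
      fun w : (Quot.mk r ⁻¹' V) => f ⟨w.1, w.2⟩ := by
    funext u
    exact hspec ⟨Quot.mk r u.1, u.2⟩ u.1 u.2 rfl
  rw [heq]
  exact hf.comp (Continuous.subtype_mk continuous_subtype_val _)

end AuxLemmas

section StepLemmas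

set_option linter.unusedSectionVars false

variable {X : Type u} {E : Type v} {B : Type w} [TopologicalSpace X] [TopologicalSpace E]
  [TopologicalSpace B] (q : X → B) (p : E → B)

/-- "Left-or-right" projection, well-defined on the fiber join. -/
noncomputable def projL : PreJoin q p → X ⊕ E
  | Sum.inl (z, t) => if (t : ℝ) = 1 then Sum.inr z.1.2 else Sum.inl z.1.1
  | Sum.inr (Sum.inl x) => Sum.inl x
  | Sum.inr (Sum.inr e) => Sum.inr e

noncomputable def projR : PreJoin q p → X ⊕ E
  | Sum.inl (z, t) => if (t : ℝ) = 0 then Sum.inl z.1.1 else Sum.inr z.1.2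
  | Sum.inr (Sum.inl x) => Sum.inl x
  | Sum.inr (Sum.inr e) => Sum.inr e

noncomputable def Lmap : FiberJoin q p → X ⊕ E :=
  Quot.lift (projL q p) (by rintro a b (⟨z⟩ | ⟨z⟩) <;> norm_num [projL])

noncomputable def Rmap : FiberJoin q p → X ⊕ E :=
  Quot.lift (projR q p) (by rintro a b (⟨z⟩ | ⟨z⟩) <;> norm_num [projR])

def predL (U : Set X) : PreJoin q p → Prop
  | Sum.inl (z, t) => (t : ℝ) < 1 ∧ z.1.1 ∈ U
  | Sum.inr (Sum.inl x) => x ∈ U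
  | Sum.inr (Sum.inr _) => False

def predR : PreJoin q p → Prop
  | Sum.inl (_, t) => 0 < (t : ℝ)
  | Sum.inr (Sum.inl _) => False
  | Sum.inr (Sum.inr _) => True

def fL (U : Set X) (s : U → E) : {w : PreJoin q p // predL q p U w} → E
  | ⟨Sum.inl (z, _), h⟩ => s ⟨z.1.1, h.2⟩
  | ⟨Sum.inr (Sum.inl x), h⟩ => s ⟨x, h⟩
  | ⟨Sum.inr (Sum.inr _), h⟩ => h.elim

def fR : {w : PreJoin q p // predR q p w} → E
  | ⟨Sum.inl (z, _), _⟩ => z.1.2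
  | ⟨Sum.inr (Sum.inl _), h⟩ => h.elim
  | ⟨Sum.inr (Sum.inr e), _⟩ => e

variable {q p}

lemma predL_sat (U : Set X) : ∀ a b, JoinRel q p a b → predL q p U a = predL q p U b := by
  rintro a b (⟨z⟩ | ⟨z⟩) <;> norm_num [predL]

lemma predR_sat : ∀ a b, JoinRel q p a b → predR q p a = predR q p b := by
  rintro a b (⟨z⟩ | ⟨z⟩) <;> norm_num [predR]

lemma predL_open {U : Set X} (hU : IsOpen U) : IsOpen {w | predL q p U w} := by
  refine isOpen_sum_iff.mpr ?_
  refine ⟨?_, ?_⟩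
  · exact IsOpen.inter
      (IsOpen.preimage (show Continuous fun w : {z : X × E // q z.1 = p z.2} × I => (w.2 : ℝ)
        by fun_prop) isOpen_Iio)
      (IsOpen.preimage (show Continuous fun w : {z : X × E // q z.1 = p z.2} × I => w.1.1.1
        by fun_prop) hU)
  · rw [isOpen_sum_iff]
    exact ⟨hU, isOpen_empty⟩

lemma predR_open : IsOpen {w | predR q p w} := by
  refine isOpen_sum_iff.mpr ?_
  refine ⟨?_, ?_⟩
  · exact IsOpen.preimage (show Continuous fun w : {z : X × E // q z.1 = p z.2} × I => (w.2 : ℝ)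
      by fun_prop) isOpen_Ioi
  · rw [isOpen_sum_iff]
    exact ⟨isOpen_empty, isOpen_univ⟩

lemma fL_cont {U : Set X} {s : U → E} (hs : Continuous s) : Continuous (fL q p U s) := by
  apply continuous_subtype_sum_cases
  · show Continuous fun a : {a : {z : X × E // q z.1 = p z.2} × I //
        predL q p U (Sum.inl a)} => s ⟨a.1.1.1.1, a.2.2⟩
    exact hs.comp (Continuous.subtype_mk (by fun_prop) _)
  · apply continuous_subtype_sum_cases
    · show Continuous fun x : {x : X // predL q p U (Sum.inr (Sum.inl x))} => s ⟨x.1, x.2⟩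
      exact hs.comp (Continuous.subtype_mk continuous_subtype_val _)
    · haveI : IsEmpty {e : E // predL q p U (Sum.inr (Sum.inr e))} := ⟨fun x => x.2⟩
      refine continuous_def.mpr fun O _ => ?_
      rw [Set.eq_empty_of_isEmpty (_ ⁻¹' O)]
      exact isOpen_empty

lemma fR_cont : Continuous (fR q p) := by
  apply continuous_subtype_sum_cases
  · show Continuous fun a : {a : {z : X × E // q z.1 = p z.2} × I //
        predR q p (Sum.inl a)} => a.1.1.1.2
    fun_prop
  · apply continuous_subtype_sum_cases
    · haveI : IsEmpty {x : X // predR q p (Sum.inr (Sum.inl x))} := ⟨fun x => x.2⟩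
      refine continuous_def.mpr fun O _ => ?_
      rw [Set.eq_empty_of_isEmpty (_ ⁻¹' O)]
      exact isOpen_empty
    · show Continuous fun e : {e : E // predR q p (Sum.inr (Sum.inr e))} => e.1
      exact continuous_subtype_val

lemma fL_eq {U : Set X} (s : U → E) :
    ∀ (w : PreJoin q p) (h : predL q p U w), ∃ (x : X) (hx : x ∈ U),
      projL q p w = Sum.inl x ∧ fL q p U s ⟨w, h⟩ = s ⟨x, hx⟩ := by
  rintro (⟨z, t⟩ | x | e) h
  · exact ⟨z.1.1, h.2, by simp [projL, ne_of_lt h.1], rfl⟩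
  · exact ⟨x, h, rfl, rfl⟩
  · exact h.elim

lemma fR_eq : ∀ (w : PreJoin q p) (h : predR q p w),
    projR q p w = Sum.inr (fR q p ⟨w, h⟩) := by
  rintro (⟨z, t⟩ | x | e) h
  · simp [projR, fR, ne_of_gt h]
  · exact h.elim
  · rfl

lemma fL_const {U : Set X} (s : U → E) :
    ∀ (w w' : PreJoin q p) (h : predL q p U w) (h' : predL q p U w'),
      Quot.mk (JoinRel q p) w = Quot.mk (JoinRel q p) w' →
      fL q p U s ⟨w, h⟩ = fL q p U s ⟨w', h'⟩ := by
  intro w w' h h' hmk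
  obtain ⟨x, hx, hp1, hv⟩ := fL_eq (q := q) (p := p) s w h
  obtain ⟨x', hx', hp1', hv'⟩ := fL_eq (q := q) (p := p) s w' h'
  have hpr : projL q p w = projL q p w' := congrArg (Lmap q p) hmk
  rw [hp1, hp1'] at hpr
  obtain rfl : x = x' := by injection hpr
  rw [hv, hv']

lemma fR_const :
    ∀ (w w' : PreJoin q p) (h : predR q p w) (h' : predR q p w'),
      Quot.mk (JoinRel q p) w = Quot.mk (JoinRel q p) w' →
      fR q p ⟨w, h⟩ = fR q p ⟨w', h'⟩ := by
  intro w w' h h' hmk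
  have hpr : projR q p w = projR q p w' := congrArg (Rmap q p) hmk
  rw [fR_eq w h, fR_eq w' h'] at hpr
  injection hpr

lemma fL_val {U : Set X} {s : U → E} (hs : ∀ x : U, p (s x) = q x) :
    ∀ (w : PreJoin q p) (h : predL q p U w),
      p (fL q p U s ⟨w, h⟩) = joinMap q p (Quot.mk (JoinRel q p) w) := by
  rintro (⟨z, t⟩ | x | e) h
  · exact hs _
  · exact hs _
  · exact h.elim

lemma fR_val :
    ∀ (w : PreJoin q p) (h : predR q p w),
      p (fR q p ⟨w, h⟩) = joinMap q p (Quot.mk (JoinRel q p) w) := by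
  rintro (⟨z, t⟩ | x | e) h
  · exact z.2.symm
  · exact h.elim
  · rfl

theorem step_cover {n : ℕ}
    (hU : ∃ U : Fin (n + 1) → Set X, (∀ i, IsOpen (U i)) ∧ (∀ x, ∃ i, x ∈ U i) ∧
      ∀ i, ∃ s : U i → E, Continuous s ∧ ∀ x : U i, p (s x) = q x) :
    ∃ V : Fin (n + 1 + 1) → Set (FiberJoin q p), (∀ i, IsOpen (V i)) ∧ (∀ z, ∃ i, z ∈ V i) ∧
      ∀ i, ∃ sec : V i → E, Continuous sec ∧
        ∀ z : V i, p (sec z) = joinMap q p (z : FiberJoin q p) := by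
  obtain ⟨U, hUo, hUc, hUs⟩ := hU
  choose s hscont hsval using hUs
  have hL : ∀ i : Fin (n + 1), ∃ (V : Set (Quot (JoinRel q p))) (sec : V → E), IsOpen V ∧
      Continuous sec ∧ (∀ w, Quot.mk (JoinRel q p) w ∈ V ↔ predL q p (U i) w) ∧
      ∀ (v : V) (w) (h : predL q p (U i) w), v.1 = Quot.mk (JoinRel q p) w →
        sec v = fL q p (U i) (s i) ⟨w, h⟩ :=
    fun i => exists_open_sec _ _ (predL_sat (U i)) (predL_open (hUo i))
      (fL q p (U i) (s i)) (fL_cont (hscont i)) (fL_const (s i))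
  choose VL secL hVLo hsecLc hVLmem hVLspec using hL
  obtain ⟨VR, secR, hVRo, hsecRc, hVRmem, hVRspec⟩ :=
    exists_open_sec (JoinRel q p) (predR q p) predR_sat predR_open (fR q p) fR_cont fR_const
  refine ⟨Fin.lastCases (motive := fun _ => Set (Quot (JoinRel q p))) VR VL, ?_, ?_, ?_⟩
  · intro i
    induction i using Fin.lastCases with
    | last => simpa using (show IsOpen (X := FiberJoin q p) VR from hVRo)
    | cast i => simpa using (show IsOpen (X := FiberJoin q p) (VL i) from hVLo i)
  · intro z
    obtain ⟨w, rfl⟩ := Quot.exists_rep z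
    rcases w with ⟨z, t⟩ | x | e
    · by_cases h : (t : ℝ) < 1
      · obtain ⟨i, hi⟩ := hUc z.1.1
        refine ⟨i.castSucc, ?_⟩
        simp only [Fin.lastCases_castSucc]
        exact (hVLmem i _).mpr ⟨h, hi⟩
      · refine ⟨Fin.last _, ?_⟩
        simp only [Fin.lastCases_last]
        refine (hVRmem _).mpr ?_
        show 0 < (t : ℝ)
        have h1 : (t : ℝ) = 1 := le_antisymm t.2.2 (not_lt.mp h)
        rw [h1]; norm_num
    · obtain ⟨i, hi⟩ := hUc x
      refine ⟨i.castSucc, ?_⟩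
      simp only [Fin.lastCases_castSucc]
      exact (hVLmem i _).mpr hi
    · refine ⟨Fin.last _, ?_⟩
      simp only [Fin.lastCases_last]
      exact (hVRmem _).mpr trivial
  · intro i
    induction i using Fin.lastCases with
    | last =>
      beta_reduce
      rw [Fin.lastCases_last]
      refine ⟨secR, hsecRc, ?_⟩
      rintro ⟨v, hv⟩
      obtain ⟨w, rfl⟩ := Quot.exists_rep v
      have hw := (hVRmem w).mp hv
      exact (congrArg p (hVRspec ⟨_, hv⟩ w hw rfl)).trans (fR_val w hw)
    | cast i =>
      beta_reduce
      rw [Fin.lastCases_castSucc]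
      refine ⟨secL i, hsecLc i, ?_⟩
      rintro ⟨v, hv⟩
      obtain ⟨w, rfl⟩ := Quot.exists_rep v
      have hw := (hVLmem i w).mp hv
      exact (congrArg p (hVLspec i ⟨_, hv⟩ w hw rfl)).trans (fL_val (hsval i) w hw)

end StepLemmas

/-- For a continuous map `p : E → B` and `n ≥ 0`, the `n`-fold join
`*ⁿ_B E` can be covered by `n+1` open sets `U i`, on each of which the restriction of
the `n`-th join map factors continuously through `p`. -/
theorem nJoin_cover_factor {E : Type u} {B : Type v}
    [TopologicalSpace E] [TopologicalSpace B]
    (p : E → B) (hp : Continuous p) (n : ℕ) :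
    ∃ U : Fin (n + 1) → Set (nJoin p n),
      (∀ i, IsOpen (U i)) ∧ (∀ z, ∃ i, z ∈ U i) ∧
      ∀ i, ∃ sec : U i → E, Continuous sec ∧
        ∀ z : U i, p (sec z) = nJoinMap p n (z : nJoin p n) := by
  induction n with
  | zero =>
      exact ⟨fun _ => Set.univ, fun _ => isOpen_univ, fun z => ⟨0, trivial⟩,
        fun _ => ⟨fun z => z.1, continuous_subtype_val, fun _ => rfl⟩⟩
  | succ n ih =>
      exact step_cover (q := nJoinMap p n) (p := p) ih
end

section
/- Let B be a normal topological space, let p: E → B and p': E' → B be continuous maps, let U, U' ⊆ B be open sets on which p, respectively p', admit continuous local sections, and let C ⊆ U and C' ⊆ U' be closed subsets of B. Then there exists an open set W ⊆ B with C ∪ C' ⊆ W on which the join map j_{p,p'}: E *_B E' → B admits a continuous local section. -/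
open unitInterval

universe u v w

/-- Over a normal base, local sections of `p` on `U ⊇ C` (closed) and
of `p'` on `U' ⊇ C'` (closed) can be combined to a local section of the join map
on an open set containing `C ∪ C'`. -/
theorem joinMap_section_of_closed_subsets {E : Type u} {E' : Type v} {B : Type w}
    [TopologicalSpace E] [TopologicalSpace E'] [TopologicalSpace B] [NormalSpace B]
    (p : E → B) (p' : E' → B) (hp : Continuous p) (hp' : Continuous p')
    (U U' : Set B) (hU : IsOpen U) (hU' : IsOpen U')
    (s : U → E) (hs : Continuous s) (hsec : ∀ x : U, p (s x) = (x : B))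
    (s' : U' → E') (hs' : Continuous s') (hsec' : ∀ x : U', p' (s' x) = (x : B))
    (C C' : Set B) (hC : IsClosed C) (hC' : IsClosed C')
    (hCU : C ⊆ U) (hC'U' : C' ⊆ U') :
    ∃ W : Set B, IsOpen W ∧ C ∪ C' ⊆ W ∧
      ∃ t : W → FiberJoin p p', Continuous t ∧
        ∀ x : W, joinMap p p' (t x) = (x : B) := by
  classical
  -- separate the closed sets `C \ U'` and `C' \ U`
  have hdisj : Disjoint (C \ U') (C' \ U) := by
    rw [Set.disjoint_left]
    rintro x ⟨hxC, _⟩ ⟨_, hxU⟩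
    exact hxU (hCU hxC)
  have hA : IsClosed (C \ U') := hC.sdiff hU'
  have hA' : IsClosed (C' \ U) := hC'.sdiff hU
  obtain ⟨V₁, V₁', hV₁, hV₁', hAV₁, hA'V₁', hVV⟩ := normal_separation hA hA' hdisj
  obtain ⟨V, hV, hAV, hVc⟩ := normal_exists_closure_subset hA hV₁ hAV₁
  obtain ⟨V', hV', hA'V', hV'c⟩ := normal_exists_closure_subset hA' hV₁' hA'V₁'
  have hVV' : Disjoint (closure V) (closure V') := hVV.mono hVc hV'c
  obtain ⟨f, hf0, hf1, hf01⟩ :=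
    exists_continuous_zero_one_of_isClosed isClosed_closure isClosed_closure hVV'
  -- the Urysohn function with values in the unit interval
  set g : B → I := fun x => ⟨f x, hf01 x⟩ with hg_def
  have hg : Continuous g := f.continuous.subtype_mk _
  have hgV : ∀ x ∈ V, g x = 0 := fun x hx => Subtype.ext (hf0 (subset_closure hx))
  have hgV' : ∀ x ∈ V', g x = 1 := fun x hx => Subtype.ext (hf1 (subset_closure hx))
  set W : Set B := (U ∩ U') ∪ ((U ∩ V) ∪ (U' ∩ V')) with hW_def
  have hWopen : IsOpen W := ((hU.inter hU').union ((hU.inter hV).union (hU'.inter hV')))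
  have hWsub : C ∪ C' ⊆ W := by
    rintro x (hx | hx)
    · by_cases h : x ∈ U'
      · exact Or.inl ⟨hCU hx, h⟩
      · exact Or.inr (Or.inl ⟨hCU hx, hAV ⟨hx, h⟩⟩)
    · by_cases h : x ∈ U
      · exact Or.inl ⟨h, hC'U' hx⟩
      · exact Or.inr (Or.inr ⟨hC'U' hx, hA'V' ⟨hx, h⟩⟩)
  -- membership facts
  have hmemU' : ∀ x : W, (x : B) ∉ U ∩ U' → (x : B) ∉ U → (x : B) ∈ U' := by
    rintro ⟨x, hx | hx | hx⟩ h1 h2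
    · exact absurd hx h1
    · exact absurd hx.1 h2
    · exact hx.1
  -- the mixed element
  have hfib : ∀ (x : B) (h : x ∈ U ∩ U'), p (s ⟨x, h.1⟩) = p' (s' ⟨x, h.2⟩) := by
    intro x h
    rw [hsec ⟨x, h.1⟩, hsec' ⟨x, h.2⟩]
  set t : W → FiberJoin p p' := fun x =>
    if h : (x : B) ∈ U ∩ U' then
      Quot.mk _ (Sum.inl (⟨(s ⟨x, h.1⟩, s' ⟨x, h.2⟩), hfib x h⟩, g x))
    else if h1 : (x : B) ∈ U then Quot.mk _ (Sum.inr (Sum.inl (s ⟨x, h1⟩)))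
    else Quot.mk _ (Sum.inr (Sum.inr (s' ⟨x, hmemU' x h h1⟩))) with ht_def
  refine ⟨W, hWopen, hWsub, t, ?_, ?_⟩
  · -- continuity
    rw [continuous_iff_continuousAt]
    intro x
    by_cases hx1 : (x : B) ∈ U ∩ U'
    · -- on U ∩ U' the map is given by the mixed formula
      set S : Set W := ((↑) : W → B) ⁻¹' (U ∩ U') with hS_def
      have hSopen : IsOpen S := (hU.inter hU').preimage continuous_subtype_val
      have hcont : ContinuousOn t S := by
        rw [continuousOn_iff_continuous_restrict]
        have heq : S.domRestrict t = fun y : S =>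
            Quot.mk _ (Sum.inl (⟨(s ⟨(y : W), y.2.1⟩, s' ⟨(y : W), y.2.2⟩),
              hfib _ y.2⟩, g (y : W))) := by
          funext y
          exact dif_pos y.2
        rw [heq]
        have hval : Continuous fun y : S => ((y : W) : B) :=
          continuous_subtype_val.comp continuous_subtype_val
        exact (continuous_quot_mk (X := PreJoin p p') (r := JoinRel p p')).comp <| continuous_inl.comp <|
          (((hs.comp (hval.subtype_mk fun y => y.2.1)).prodMk
            (hs'.comp (hval.subtype_mk fun y => y.2.2))).subtype_mk _).prodMk
            (hg.comp hval)
      exact hcont.continuousAt (hSopen.mem_nhds hx1)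
    · rcases x.2 with hx | hx | hx
      · exact absurd hx hx1
      · -- on U ∩ V the map agrees with `x ↦ [s x]`
        set S : Set W := ((↑) : W → B) ⁻¹' (U ∩ V) with hS_def
        have hSopen : IsOpen S := (hU.inter hV).preimage continuous_subtype_val
        have hcont : ContinuousOn t S := by
          rw [continuousOn_iff_continuous_restrict]
          have heq : S.domRestrict t = fun y : S =>
              Quot.mk _ (Sum.inr (Sum.inl (s ⟨(y : W), y.2.1⟩))) := by
            funext y
            simp only [Set.domRestrict_apply, ht_def]
            by_cases h : ((y : W) : B) ∈ U ∩ U'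
            · refine (dif_pos h).trans ?_
              have h0 : g ((y : W) : B) = 0 := hgV _ y.2.2
              rw [h0]
              exact Quot.sound (JoinRel.zero _)
            · exact (dif_neg h).trans (dif_pos y.2.1)
          rw [heq]
          have hval : Continuous fun y : S => ((y : W) : B) :=
            continuous_subtype_val.comp continuous_subtype_val
          exact (continuous_quot_mk (X := PreJoin p p') (r := JoinRel p p')).comp <| continuous_inr.comp <| continuous_inl.comp <|
            hs.comp (hval.subtype_mk fun y => y.2.1)
        exact hcont.continuousAt (hSopen.mem_nhds hx)
      · -- on U' ∩ V' the map agrees with `x ↦ [s' x]`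
        set S : Set W := ((↑) : W → B) ⁻¹' (U' ∩ V') with hS_def
        have hSopen : IsOpen S := (hU'.inter hV').preimage continuous_subtype_val
        have hcont : ContinuousOn t S := by
          rw [continuousOn_iff_continuous_restrict]
          have heq : S.domRestrict t = fun y : S =>
              Quot.mk _ (Sum.inr (Sum.inr (s' ⟨(y : W), y.2.1⟩))) := by
            funext y
            simp only [Set.domRestrict_apply, ht_def]
            by_cases h : ((y : W) : B) ∈ U ∩ U'
            · refine (dif_pos h).trans ?_
              have h1 : g ((y : W) : B) = 1 := hgV' _ y.2.2
              rw [h1]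
              exact Quot.sound (JoinRel.one _)
            · refine (dif_neg h).trans ?_
              by_cases h1 : ((y : W) : B) ∈ U
              · exact absurd ⟨h1, y.2.1⟩ h
              · exact dif_neg h1
          rw [heq]
          have hval : Continuous fun y : S => ((y : W) : B) :=
            continuous_subtype_val.comp continuous_subtype_val
          exact (continuous_quot_mk (X := PreJoin p p') (r := JoinRel p p')).comp <| continuous_inr.comp <| continuous_inr.comp <|
            hs'.comp (hval.subtype_mk fun y => y.2.1)
        exact hcont.continuousAt (hSopen.mem_nhds hx)
  · -- section property
    intro x
    simp only [ht_def]
    by_cases h : (x : B) ∈ U ∩ U'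
    · exact (congrArg (joinMap p p') (dif_pos h)).trans (hsec ⟨x, h.1⟩)
    · by_cases h1 : (x : B) ∈ U
      · refine (congrArg (joinMap p p') ((dif_neg h).trans (dif_pos h1))).trans ?_
        exact hsec ⟨x, h1⟩
      · refine (congrArg (joinMap p p') ((dif_neg h).trans (dif_neg h1))).trans ?_
        exact hsec' ⟨x, hmemU' x h h1⟩
end
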